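/- Let M be a refinement monoid with algebraic preordering ≤ (x ≤ y iff there exists z with x + z = y), let a, b, c ∈ M, and let n be a positive integer. If a + c = b + c, then there exist elements d, u, v of M such that a = d + u, b = d + v, and n·u ≤ c and n·v ≤ c. -/
import Mathlib


/-- The refinement property for a commutative monoid. -/
def HasRefinement (M : Type*) [AddCommMonoid M] : Prop :=
  ∀ a₀ a₁ b₀ b₁ : M, a₀ + a₁ = b₀ + b₁ →
    ∃ c₀₀ c₀₁ c₁₀ c₁₁ : M,
      a₀ = c₀₀ + c₀₁ ∧ a₁ = c₁₀ + c₁₁ ∧ b₀ = c₀₀ + c₁₀ ∧ b₁ = c₀₁ + c₁₁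

/-- The algebraic preordering on a commutative monoid: `x ≤ y` iff `∃ z, x + z = y`. -/
def algLE {M : Type*} [AddCommMonoid M] (x y : M) : Prop := ∃ z, x + z = y

lemma aux_refine {M : Type*} [AddCommMonoid M] (hM : HasRefinement M) :
    ∀ n : ℕ, ∀ a b c : M, a + c = b + c →
      ∃ d u v : M, a = d + u ∧ b = d + v ∧ algLE (n • u) c ∧ algLE (n • v) c := by
  intro n
  induction n with
  | zero =>
    intro a b c _
    exact ⟨0, a, b, by simp, by simp, ⟨c, by simp⟩, ⟨c, by simp⟩⟩
  | succ n ih =>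
    intro a b c h
    obtain ⟨d, u, v, c₁, ha, hc1, hb, hc2⟩ := hM a c b c h
    have key : u + c₁ = v + c₁ := hc2.symm.trans hc1
    obtain ⟨e, u', v', hu, hv, ⟨s, hs⟩, ⟨t, ht⟩⟩ := ih u v c₁ key
    refine ⟨d + e, u', v', ?_, ?_, ⟨e + s, ?_⟩, ⟨e + t, ?_⟩⟩
    · rw [ha, hu, add_assoc]
    · rw [hb, hv, add_assoc]
    · rw [succ_nsmul, hc2, hu, ← hs]; abel
    · rw [succ_nsmul, hc1, hv, ← ht]; abel

theorem stmt1 {M : Type*} [AddCommMonoid M] (hM : HasRefinement M)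
    (a b c : M) (n : ℕ) (hn : 0 < n) (h : a + c = b + c) :
    ∃ d u v : M, a = d + u ∧ b = d + v ∧ algLE (n • u) c ∧ algLE (n • v) c := by
  exact aux_refine hM n a b c h
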